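/- (Damping Matrix Positivity.) Let Λ be a linear map on n×n complex matrices whose Choi matrix is positive semidefinite, and suppose Λ is block-diagonal: Λ(E_{ij}) = α_{ij} • E_{ij} for all i ≠ j, and Λ(E_{ii}) is diagonal for all i, with p(i→j) denoting the (j,j) entry of Λ(E_{ii}). Then the n×n damping matrix D with diagonal entries D_{ii} = p(i→i) and off-diagonal entries D_{ij} = α_{ij} (i ≠ j) is positive semidefinite. -/

import Mathlib

open Matrix ComplexOrder

/-- **Damping Matrix Positivity.** If a linear map `Λ` on `n×n` complex matrices has a
positive semidefinite Choi matrix and is block-diagonal (`Λ(E_{ij}) = α_{ij} • E_{ij}` for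
`i ≠ j`, and `Λ(E_{ii})` diagonal), then the damping matrix, with diagonal entries
`p(i→i) = (Λ(E_{ii}))_{ii}` and off-diagonal entries `α_{ij}`, is positive semidefinite. -/
theorem damping_matrix_posSemidef (n : ℕ)
    (Λ : Matrix (Fin n) (Fin n) ℂ →ₗ[ℂ] Matrix (Fin n) (Fin n) ℂ)
    (hChoi : Matrix.PosSemidef (Matrix.of fun p q : Fin n × Fin n =>
      Λ (Matrix.single p.1 q.1 1) p.2 q.2))
    (α : Fin n → Fin n → ℂ)
    (hα : ∀ i j : Fin n, i ≠ j →
      Λ (Matrix.single i j 1) = α i j • Matrix.single i j 1)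
    (hdiag : ∀ i : Fin n, (Λ (Matrix.single i i 1)).IsDiag) :
    Matrix.PosSemidef (Matrix.of fun i j : Fin n =>
      if i = j then Λ (Matrix.single i i 1) i i else α i j) := by
  have h := hChoi.submatrix (fun i : Fin n => (i, i))
  convert h using 1
  ext i j
  by_cases hij : i = j
  · subst hij
    simp [Matrix.submatrix_apply]
  · simp [Matrix.submatrix_apply, hij, hα i j hij, Matrix.single_apply_same, Matrix.smul_apply]
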